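/- Let (X,d) be a metric space and let u, u_1, u_2, ... be fuzzy sets in F_USCG(X). Then the following statements are equivalent: (i) u_n Γ-converges to u; (ii) [u_n]_α Kuratowski converges to [u]_α for Lebesgue-almost every α ∈ (0,1); (iii) [u_n]_α Kuratowski converges to [u]_α for all α ∈ (0,1) \ P(u); (iv) [u_n]_α Kuratowski converges to [u]_α for all α in some dense subset P of (0,1) \ P(u); (v) [u_n]_α Kuratowski converges to [u]_α for all α in some countable dense subset P of (0,1) \ P(u). -/

import Mathlib

open Set Filter Metric Topology MeasureTheory

/-- The α-cut of a fuzzy set `u : X → ℝ`: for `α ≠ 0` it is `{x | u x ≥ α}`,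
and for `α = 0` it is the closure of `{x | u x > 0}`. -/
noncomputable def cut {X : Type*} [MetricSpace X] (u : X → ℝ) (α : ℝ) : Set X :=
  if α = 0 then closure {x | 0 < u x} else {x | α ≤ u x}

/-- `u` is a normal upper semicontinuous fuzzy set: it takes values in `[0,1]` and
all α-cuts (`α ∈ [0,1]`) are nonempty and closed. -/
def FUSC {X : Type*} [MetricSpace X] (u : X → ℝ) : Prop :=
  (∀ x, u x ∈ Set.Icc (0:ℝ) 1) ∧
    ∀ α ∈ Set.Icc (0:ℝ) 1, (cut u α).Nonempty ∧ IsClosed (cut u α)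

/-- `F_USCG(X)`: fuzzy sets in `F_USC(X)` with compact positive α-cuts. -/
def FUSCG {X : Type*} [MetricSpace X] (u : X → ℝ) : Prop :=
  FUSC u ∧ ∀ α ∈ Set.Ioc (0:ℝ) 1, IsCompact (cut u α)

/-- `F_USCB(X)`: fuzzy sets in `F_USC(X)` with compact support. -/
def FUSCB {X : Type*} [MetricSpace X] (u : X → ℝ) : Prop :=
  FUSC u ∧ IsCompact (cut u 0)

/-- Kuratowski lower limit of a sequence of sets. -/
def kurLiminf {Y : Type*} [MetricSpace Y] (C : ℕ → Set Y) : Set Y :=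
  {y | ∃ f : ℕ → Y, (∀ n, f n ∈ C n) ∧ Tendsto f atTop (𝓝 y)}

/-- Kuratowski upper limit of a sequence of sets. -/
def kurLimsup {Y : Type*} [MetricSpace Y] (C : ℕ → Set Y) : Set Y :=
  {y | ∃ φ : ℕ → ℕ, StrictMono φ ∧
        ∃ f : ℕ → Y, (∀ n, f n ∈ C (φ n)) ∧ Tendsto f atTop (𝓝 y)}

/-- Kuratowski convergence of a sequence of sets to a set. -/
def KurConv {Y : Type*} [MetricSpace Y] (C : ℕ → Set Y) (D : Set Y) : Prop :=
  kurLiminf C = D ∧ kurLimsup C = D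

/-- The endograph of `u`: `{(x,t) ∈ X × [0,1] : u x ≥ t}`. -/
def endo {X : Type*} [MetricSpace X] (u : X → ℝ) : Set (X × ℝ) :=
  {p | p.2 ∈ Set.Icc (0:ℝ) 1 ∧ p.2 ≤ u p.1}

/-- The sendograph of `u`: `end u ∩ ([u]₀ × [0,1])`. -/
noncomputable def sendo {X : Type*} [MetricSpace X] (u : X → ℝ) : Set (X × ℝ) :=
  endo u ∩ (cut u 0) ×ˢ (Set.Icc (0:ℝ) 1)

/-- Γ-convergence: Kuratowski convergence of endographs. -/
def GammaConv {X : Type*} [MetricSpace X] (un : ℕ → X → ℝ) (u : X → ℝ) : Prop :=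
  KurConv (fun n => endo (un n)) (endo u)

/-- The endograph metric. -/
noncomputable def Hend {X : Type*} [MetricSpace X] (u v : X → ℝ) : ℝ :=
  hausdorffDist (endo u) (endo v)

/-- The sendograph metric. -/
noncomputable def Hsend {X : Type*} [MetricSpace X] (u v : X → ℝ) : ℝ :=
  hausdorffDist (sendo u) (sendo v)

/-- The set of platform points of `u`:
`α ∈ (0,1)` with `closure {u > α}` a proper subset of `[u]_α`. -/
def Pset {X : Type*} [MetricSpace X] (u : X → ℝ) : Set ℝ :=
  {α | α ∈ Set.Ioo (0:ℝ) 1 ∧ closure {x | α < u x} ⊂ cut u α}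

/-- `P₀(u)`: the set of `α ∈ (0,1)` such that `H([u]_β, [u]_α)` does not tend to `0`
as `β → α`. -/
def P0set {X : Type*} [MetricSpace X] (u : X → ℝ) : Set ℝ :=
  {α | α ∈ Set.Ioo (0:ℝ) 1 ∧
    ¬ Tendsto (fun β => hausdorffDist (cut u β) (cut u α)) (𝓝[≠] α) (𝓝 0)}


section helpers
variable {X : Type*} [MetricSpace X] {u : X → ℝ}

lemma cut_eq (u : X → ℝ) {α : ℝ} (hα : α ≠ 0) : cut u α = {x | α ≤ u x} := if_neg hα

lemma cut_anti (h0 : ∀ x, 0 ≤ u x) {a b : ℝ} (hab : a ≤ b) : cut u b ⊆ cut u a := by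
  rcases eq_or_ne b 0 with rfl | hb
  · rcases eq_or_ne a 0 with rfl | ha
    · exact subset_rfl
    · have ha' : a < 0 := lt_of_le_of_ne hab ha
      rw [cut_eq u ha]
      exact fun x _ => le_of_lt (lt_of_lt_of_le ha' (h0 x))
  · rcases eq_or_ne a 0 with rfl | ha
    · have hb' : 0 < b := lt_of_le_of_ne hab (Ne.symm hb)
      rw [cut_eq u hb, cut, if_pos rfl]
      exact fun x hx => subset_closure (lt_of_lt_of_le hb' hx)
    · rw [cut_eq u hb, cut_eq u ha]
      exact fun x hx => le_trans hab hx

lemma cut_nonempty (hu : FUSC u) {β : ℝ} (hβ : β ≤ 1) : (cut u β).Nonempty :=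
  ((hu.2 1 ⟨zero_le_one, le_rfl⟩).1).mono (cut_anti (fun x => (hu.1 x).1) hβ)

lemma kurLiminf_subset_kurLimsup {Y : Type*} [MetricSpace Y] (C : ℕ → Set Y) :
    kurLiminf C ⊆ kurLimsup C :=
  fun _ ⟨f, hf, hft⟩ => ⟨id, strictMono_id, f, hf, hft⟩

lemma mem_kurLiminf_of_eps {Y : Type*} [MetricSpace Y] {C : ℕ → Set Y} {x : Y}
    (hC : ∀ n, (C n).Nonempty)
    (h : ∀ ε > (0:ℝ), ∀ᶠ n in atTop, ∃ y ∈ C n, dist y x < ε) : x ∈ kurLiminf C := by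
  have hex : ∀ n : ℕ, ∃ y ∈ C n, dist x y < infDist x (C n) + ((n:ℝ)+1)⁻¹ := fun n =>
    (infDist_lt_iff (hC n)).1 (lt_add_of_pos_right _ (by positivity))
  choose f hf hfd using hex
  have hinf : Tendsto (fun n => infDist x (C n)) atTop (𝓝 0) := by
    rw [Metric.tendsto_atTop]
    intro ε hε
    obtain ⟨N, hN⟩ := eventually_atTop.1 (h (ε/2) (half_pos hε))
    refine ⟨N, fun n hn => ?_⟩
    obtain ⟨y, hy, hyd⟩ := hN n hn
    rw [Real.dist_eq, sub_zero, abs_of_nonneg infDist_nonneg]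
    calc infDist x (C n) ≤ dist x y := infDist_le_dist_of_mem hy
      _ < ε := by rw [dist_comm]; linarith
  refine ⟨f, hf, tendsto_iff_dist_tendsto_zero.2 ?_⟩
  have h2 : Tendsto (fun n : ℕ => ((n:ℝ)+1)⁻¹) atTop (𝓝 0) := by
    simpa [one_div] using tendsto_one_div_add_atTop_nhds_zero_nat (𝕜 := ℝ)
  have hgl : Tendsto (fun n : ℕ => infDist x (C n) + ((n:ℝ)+1)⁻¹) atTop (𝓝 0) := by
    simpa using hinf.add h2
  exact squeeze_zero (fun n => dist_nonneg) (fun n => by rw [dist_comm]; exact (hfd n).le) hgl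

lemma Pset_countable (hu : FUSCG u) : (Pset u).Countable := by
  have h0 : ∀ x, 0 ≤ u x := fun x => (hu.1.1 x).1
  have key : ∀ k : ℕ, (Pset u ∩ {α | ((k:ℝ)+2)⁻¹ < α}).Countable := by
    intro k
    set ε : ℝ := ((k:ℝ)+2)⁻¹ with hεdef
    have hε0 : 0 < ε := by positivity
    have hε1 : ε ≤ 1 := by
      rw [hεdef]
      rw [inv_le_one_iff₀]
      right
      have : (0:ℝ) ≤ (k:ℝ) := Nat.cast_nonneg k
      linarith
    obtain ⟨c, hcc, hKc⟩ := (hu.2 ε ⟨hε0, hε1⟩).isSeparable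
    set g : X → ℝ → ℝ := fun q β => infDist q (cut u (min β 1)) with hgdef
    have hgen : ∀ β : ℝ, (cut u (min β 1)).Nonempty := fun β =>
      cut_nonempty hu.1 (min_le_right _ _)
    have hmono : ∀ q, Monotone (g q) := fun q a b hab =>
      infDist_le_infDist_of_subset (cut_anti h0 (min_le_min hab le_rfl)) (hgen b)
    refine Set.Countable.mono ?_
      (Set.Countable.biUnion hcc (fun q _ => (hmono q).countable_not_continuousAt))
    rintro α ⟨⟨hαI, hss⟩, hεα⟩
    by_contra hnot
    have hcont : ∀ q ∈ c, ContinuousAt (g q) α := by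
      intro q hq
      by_contra hqc
      exact hnot (mem_biUnion hq hqc)
    obtain ⟨x, hxcut, hxcl⟩ := exists_of_ssubset hss
    have hα0 : (0:ℝ) < α := hαI.1
    have hα1 : α < 1 := hαI.2
    have hSne : {y | α < u y}.Nonempty := by
      obtain ⟨y, hy⟩ := (hu.1.2 1 ⟨zero_le_one, le_rfl⟩).1
      rw [cut_eq _ one_ne_zero] at hy
      exact ⟨y, lt_of_lt_of_le hα1 hy⟩
    have hxK : x ∈ closure c := hKc (cut_anti h0 hεα.le hxcut)
    obtain ⟨v, hv, hvx⟩ := mem_closure_iff_seq_limit.1 hxK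
    have hkey : ∀ q ∈ c, infDist q {y | α < u y} ≤ infDist q (cut u α) := by
      intro q hq
      have hbd : ∀ᶠ β in 𝓝[>] α, infDist q {y | α < u y} ≤ g q β := by
        filter_upwards [Ioo_mem_nhdsGT_of_mem ⟨le_rfl, hα1⟩] with β hβ
        have hsub : cut u β ⊆ {y | α < u y} := by
          rw [cut_eq _ (ne_of_gt (hα0.trans hβ.1))]
          exact fun y hy => lt_of_lt_of_le hβ.1 hy
        have hgb : g q β = infDist q (cut u β) := by
          rw [hgdef]; simp only [min_eq_left hβ.2.le]
        rw [hgb]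
        exact infDist_le_infDist_of_subset hsub (cut_nonempty hu.1 hβ.2.le)
      have hlim : Tendsto (g q) (𝓝[>] α) (𝓝 (g q α)) := (hcont q hq).continuousWithinAt
      have hle := ge_of_tendsto hlim hbd
      simpa only [hgdef, inf_eq_left.2 hα1.le] using hle
    have hd2 : ∀ m : ℕ, infDist x {y | α < u y} ≤ 2 * dist x (v m) := by
      intro m
      calc infDist x {y | α < u y}
          ≤ infDist (v m) {y | α < u y} + dist x (v m) := infDist_le_infDist_add_dist
        _ ≤ infDist (v m) (cut u α) + dist x (v m) := by
            have := hkey (v m) (hv m); linarith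
        _ ≤ dist (v m) x + dist x (v m) := by
            have : infDist (v m) (cut u α) ≤ dist (v m) x := infDist_le_dist_of_mem hxcut
            linarith
        _ = 2 * dist x (v m) := by rw [dist_comm]; ring
    have hdist0 : Tendsto (fun m => 2 * dist x (v m)) atTop (𝓝 0) := by
      have h1 : Tendsto (fun m => dist x (v m)) atTop (𝓝 0) := by
        have := tendsto_iff_dist_tendsto_zero.1 hvx
        simpa [dist_comm] using this
      simpa using h1.const_mul 2
    have hle : infDist x {y | α < u y} ≤ 0 :=
      le_of_tendsto_of_tendsto' tendsto_const_nhds hdist0 hd2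
    have hmem : x ∈ closure {y | α < u y} := by
      rw [mem_closure_iff_infDist_zero hSne]
      exact le_antisymm hle infDist_nonneg
    exact hxcl hmem
  have hsub : Pset u ⊆ ⋃ k : ℕ, Pset u ∩ {α | ((k:ℝ)+2)⁻¹ < α} := by
    intro α hα
    have hα0 : 0 < α := hα.1.1
    obtain ⟨k, hk⟩ := exists_nat_gt α⁻¹
    refine mem_iUnion.2 ⟨k, hα, ?_⟩
    have h2 : α⁻¹ < (k:ℝ) + 2 := by linarith
    calc ((k:ℝ)+2)⁻¹ < (α⁻¹)⁻¹ := by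
          apply inv_strictAnti₀ (inv_pos.2 hα0) h2
      _ = α := inv_inv α
  exact (countable_iUnion key).mono hsub

lemma exists_between_mem (hu : FUSCG u) {P : Set ℝ} (hP1 : P ⊆ Ioo 0 1 \ Pset u)
    (hP2 : Ioo 0 1 \ Pset u ⊆ closure P) {c d : ℝ} (hc : 0 ≤ c) (hcd : c < d) (hd : d ≤ 1) :
    ∃ α ∈ P, c < α ∧ α < d := by
  have hnull : volume (Pset u) = 0 := (Pset_countable hu).measure_zero _
  have hne : (Ioo c d \ Pset u).Nonempty := by
    by_contra h
    rw [not_nonempty_iff_eq_empty, diff_eq_empty] at h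
    have hm := measure_mono_null h hnull
    rw [Real.volume_Ioo] at hm
    rw [ENNReal.ofReal_eq_zero] at hm
    linarith
  obtain ⟨β, hβI, hβP⟩ := hne
  have hβcl : β ∈ closure P := hP2 ⟨Ioo_subset_Ioo hc hd hβI, hβP⟩
  obtain ⟨α, hαI, hαP⟩ := mem_closure_iff.1 hβcl (Ioo c d) isOpen_Ioo hβI
  exact ⟨α, hαP, hαI.1, hαI.2⟩

end helpers

section imps
variable {X : Type*} [MetricSpace X] {u : X → ℝ} {un : ℕ → X → ℝ}

lemma imp13 (hu : FUSCG u) (hun : ∀ n, FUSCG (un n)) (h : GammaConv un u) :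
    ∀ α ∈ Set.Ioo (0:ℝ) 1 \ Pset u, KurConv (fun n => cut (un n) α) (cut u α) := by
  obtain ⟨hliminf, hlimsup⟩ := h
  rintro α ⟨hαI, hαP⟩
  have hα0 : (0:ℝ) < α := hαI.1
  have hα1 : α < 1 := hαI.2
  have hb : kurLimsup (fun n => cut (un n) α) ⊆ cut u α := by
    rintro x ⟨φ, hφ, f, hf, hft⟩
    have hmem : (x, α) ∈ endo u := by
      rw [← hlimsup]
      refine ⟨φ, hφ, fun n => (f n, α), fun n => ⟨⟨hα0.le, hα1.le⟩, ?_⟩,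
        hft.prodMk_nhds tendsto_const_nhds⟩
      have h' : f n ∈ cut (un (φ n)) α := hf n
      rw [cut_eq _ hα0.ne'] at h'
      exact h'
    rw [cut_eq _ hα0.ne']
    exact hmem.2
  have hcl : closure {x | α < u x} = cut u α := by
    have hsub : closure {x | α < u x} ⊆ cut u α := by
      have hclosed := (hu.1.2 α ⟨hα0.le, hα1.le⟩).2
      refine closure_minimal ?_ hclosed
      rw [cut_eq _ hα0.ne']
      exact fun y hy => show α ≤ u y from le_of_lt hy
    by_contra hne
    exact hαP ⟨hαI, hsub.ssubset_of_ne hne⟩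
  have ha : cut u α ⊆ kurLiminf (fun n => cut (un n) α) := by
    intro x hx
    apply mem_kurLiminf_of_eps (fun n => cut_nonempty (hun n).1 hα1.le)
    intro ε hε
    rw [← hcl] at hx
    obtain ⟨y, hy, hyd⟩ := Metric.mem_closure_iff.1 hx (ε/2) (half_pos hε)
    have hyendo : (y, u y) ∈ endo u := ⟨hu.1.1 y, le_rfl⟩
    rw [← hliminf] at hyendo
    obtain ⟨g, hg, hgt⟩ := hyendo
    have h2 : Tendsto (fun n => (g n).2) atTop (𝓝 (u y)) :=
      (continuous_snd.tendsto _).comp hgt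
    have h1 : Tendsto (fun n => (g n).1) atTop (𝓝 y) :=
      (continuous_fst.tendsto _).comp hgt
    have hev1 : ∀ᶠ n in atTop, α < (g n).2 := h2.eventually (eventually_gt_nhds hy)
    have hev2 : ∀ᶠ n in atTop, dist (g n).1 y < ε/2 :=
      h1 (Metric.ball_mem_nhds y (half_pos hε))
    filter_upwards [hev1, hev2] with n hn1 hn2
    refine ⟨(g n).1, ?_, ?_⟩
    · show (g n).1 ∈ cut (un n) α
      rw [cut_eq _ hα0.ne']
      exact le_trans hn1.le (hg n).2
    · have h3 := dist_triangle (g n).1 y x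
      have h4 : dist y x < ε/2 := by rw [dist_comm] at hyd; exact hyd
      linarith
  constructor
  · exact Subset.antisymm ((kurLiminf_subset_kurLimsup _).trans hb) ha
  · exact Subset.antisymm hb (ha.trans (kurLiminf_subset_kurLimsup _))

lemma imp32 (hu : FUSCG u)
    (h3 : ∀ α ∈ Set.Ioo (0:ℝ) 1 \ Pset u, KurConv (fun n => cut (un n) α) (cut u α)) :
    ∀ᵐ α ∂(volume : Measure ℝ), α ∈ Set.Ioo (0:ℝ) 1 →
      KurConv (fun n => cut (un n) α) (cut u α) := by
  rw [ae_iff]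
  apply measure_mono_null ?_ ((Pset_countable hu).measure_zero volume)
  intro α hα
  rw [mem_setOf_eq, Classical.not_imp] at hα
  by_contra hp
  exact hα.2 (h3 α ⟨hα.1, hp⟩)

lemma imp24 (hu : FUSCG u)
    (h2 : ∀ᵐ α ∂(volume : Measure ℝ), α ∈ Set.Ioo (0:ℝ) 1 →
      KurConv (fun n => cut (un n) α) (cut u α)) :
    ∃ P : Set ℝ, P ⊆ Set.Ioo (0:ℝ) 1 \ Pset u ∧
      (Set.Ioo (0:ℝ) 1 \ Pset u) ⊆ closure P ∧
      ∀ α ∈ P, KurConv (fun n => cut (un n) α) (cut u α) := by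
  rw [ae_iff] at h2
  set N := {α : ℝ | ¬(α ∈ Set.Ioo (0:ℝ) 1 →
    KurConv (fun n => cut (un n) α) (cut u α))} with hNdef
  refine ⟨(Set.Ioo 0 1 \ Pset u) \ N, diff_subset, ?_, ?_⟩
  · intro β hβ
    rw [_root_.mem_closure_iff]
    intro o ho hβo
    have hpos : 0 < volume (o ∩ Set.Ioo (0:ℝ) 1) :=
      (ho.inter isOpen_Ioo).measure_pos volume ⟨β, hβo, hβ.1⟩
    by_contra hemp
    rw [not_nonempty_iff_eq_empty] at hemp
    have hsub : o ∩ Set.Ioo (0:ℝ) 1 ⊆ Pset u ∪ N := by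
      intro γ hγ
      by_contra hγn
      rw [mem_union, not_or] at hγn
      have hmem : γ ∈ o ∩ ((Set.Ioo (0:ℝ) 1 \ Pset u) \ N) :=
        ⟨hγ.1, ⟨hγ.2, hγn.1⟩, hγn.2⟩
      rw [hemp] at hmem
      exact hmem
    have h0 : volume (o ∩ Set.Ioo (0:ℝ) 1) = 0 :=
      measure_mono_null hsub
        (measure_union_null ((Pset_countable hu).measure_zero volume) h2)
    exact absurd h0 hpos.ne'
  · intro α hα
    have h1 : α ∉ N := hα.2
    rw [hNdef, mem_setOf_eq, not_not] at h1
    exact h1 hα.1.1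

lemma imp45
    (h4 : ∃ P : Set ℝ, P ⊆ Set.Ioo (0:ℝ) 1 \ Pset u ∧
      (Set.Ioo (0:ℝ) 1 \ Pset u) ⊆ closure P ∧
      ∀ α ∈ P, KurConv (fun n => cut (un n) α) (cut u α)) :
    ∃ P : Set ℝ, P.Countable ∧ P ⊆ Set.Ioo (0:ℝ) 1 \ Pset u ∧
      (Set.Ioo (0:ℝ) 1 \ Pset u) ⊆ closure P ∧
      ∀ α ∈ P, KurConv (fun n => cut (un n) α) (cut u α) := by
  obtain ⟨P, hP1, hP2, hP3⟩ := h4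
  obtain ⟨t, htP, htc, htd⟩ :=
    (TopologicalSpace.IsSeparable.of_separableSpace P).exists_countable_dense_subset
  exact ⟨t, htc, htP.trans hP1,
    fun β hβ => closure_minimal htd isClosed_closure (hP2 hβ),
    fun α hα => hP3 α (htP hα)⟩

lemma imp51 (hu : FUSCG u) (hun : ∀ n, FUSCG (un n))
    (h5 : ∃ P : Set ℝ, P.Countable ∧ P ⊆ Set.Ioo (0:ℝ) 1 \ Pset u ∧
      (Set.Ioo (0:ℝ) 1 \ Pset u) ⊆ closure P ∧
      ∀ α ∈ P, KurConv (fun n => cut (un n) α) (cut u α)) :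
    GammaConv un u := by
  obtain ⟨P, -, hP1, hP2, hP3⟩ := h5
  have h0 : ∀ x, 0 ≤ u x := fun x => (hu.1.1 x).1
  have h0n : ∀ n x, 0 ≤ un n x := fun n x => ((hun n).1.1 x).1
  have hbetw : ∀ c d : ℝ, 0 ≤ c → c < d → d ≤ 1 → ∃ α ∈ P, c < α ∧ α < d :=
    fun c d hc hcd hd => exists_between_mem hu hP1 hP2 hc hcd hd
  have hb : kurLimsup (fun n => endo (un n)) ⊆ endo u := by
    rintro ⟨x, t⟩ ⟨φ, hφ, f, hf, hft⟩
    have ht1 : Tendsto (fun n => (f n).1) atTop (𝓝 x) := (continuous_fst.tendsto _).comp hft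
    have ht2 : Tendsto (fun n => (f n).2) atTop (𝓝 t) := (continuous_snd.tendsto _).comp hft
    have htI : t ∈ Set.Icc (0:ℝ) 1 :=
      isClosed_Icc.mem_of_tendsto ht2 (Eventually.of_forall fun n => (hf n).1)
    refine ⟨htI, ?_⟩
    by_contra hux
    push_neg at hux
    have ht0 : 0 < t := lt_of_le_of_lt (h0 x) hux
    obtain ⟨α, hαP, hcα, hαt⟩ := hbetw (max (u x) (t/2)) t
      (le_trans (h0 x) (le_max_left _ _)) (max_lt hux (by linarith)) htI.2
    have hα0 : (0:ℝ) < α := (hP1 hαP).1.1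
    have hev : ∀ᶠ n in atTop, α < (f n).2 := ht2.eventually (eventually_gt_nhds hαt)
    obtain ⟨J, hJ⟩ := eventually_atTop.1 hev
    have hx : x ∈ kurLimsup (fun n => cut (un n) α) := by
      refine ⟨fun k => φ (k + J), hφ.comp (fun a b hab => by omega),
        fun k => (f (k + J)).1, fun k => ?_, ht1.comp (tendsto_add_atTop_nat J)⟩
      show (f (k + J)).1 ∈ cut (un (φ (k + J))) α
      rw [cut_eq _ hα0.ne']
      exact le_trans (hJ (k + J) (Nat.le_add_left J k)).le (hf (k + J)).2
    rw [(hP3 α hαP).2, cut_eq _ hα0.ne'] at hx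
    exact absurd hx (not_le.2 (lt_of_le_of_lt (le_max_left _ _) hcα))
  have ha : endo u ⊆ kurLiminf (fun n => endo (un n)) := by
    rintro ⟨x, t⟩ ⟨htI, htu⟩
    rcases eq_or_lt_of_le htI.1 with heq | ht0
    · refine ⟨fun n => (x, t), fun n => ⟨⟨htI.1, htI.2⟩, ?_⟩, tendsto_const_nhds⟩
      rw [← heq]
      exact h0n n x
    · have hCne : ∀ n, (endo (un n)).Nonempty :=
        fun n => ⟨(x, 0), ⟨le_rfl, zero_le_one⟩, h0n n x⟩
      apply mem_kurLiminf_of_eps hCne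
      intro ε hε
      obtain ⟨α, hαP, hcα, hαt⟩ := hbetw (max (t - ε) (t/2)) t
        (le_trans (by linarith) (le_max_right _ _)) (max_lt (by linarith) (by linarith)) htI.2
      have hα0 : (0:ℝ) < α := (hP1 hαP).1.1
      have hα1 : α < 1 := (hP1 hαP).1.2
      have hxα : x ∈ cut u α := by
        rw [cut_eq _ hα0.ne']
        exact (hαt.trans_le htu).le
      rw [← (hP3 α hαP).1] at hxα
      obtain ⟨f, hf, hft⟩ := hxα
      have hev : ∀ᶠ n in atTop, dist (f n) x < ε := hft (Metric.ball_mem_nhds x hε)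
      filter_upwards [hev] with n hn
      refine ⟨(f n, α), ⟨⟨hα0.le, hα1.le⟩, ?_⟩, ?_⟩
      · have h' : f n ∈ cut (un n) α := hf n
        rw [cut_eq _ hα0.ne'] at h'
        exact h'
      · rw [Prod.dist_eq]
        refine max_lt hn ?_
        rw [Real.dist_eq, abs_of_neg (by linarith)]
        have := le_max_left (t - ε) (t/2)
        linarith
  constructor
  · exact Subset.antisymm ((kurLiminf_subset_kurLimsup _).trans hb) ha
  · exact Subset.antisymm hb (ha.trans (kurLiminf_subset_kurLimsup _))

end imps


theorem gamma_convergence_level_decomposition_tfae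
    {X : Type*} [MetricSpace X] (u : X → ℝ) (un : ℕ → X → ℝ)
    (hu : FUSCG u) (hun : ∀ n, FUSCG (un n)) :
    List.TFAE
      [ GammaConv un u,
        ∀ᵐ α ∂(volume : Measure ℝ), α ∈ Set.Ioo (0:ℝ) 1 →
          KurConv (fun n => cut (un n) α) (cut u α),
        ∀ α ∈ Set.Ioo (0:ℝ) 1 \ Pset u, KurConv (fun n => cut (un n) α) (cut u α),
        ∃ P : Set ℝ, P ⊆ Set.Ioo (0:ℝ) 1 \ Pset u ∧
          (Set.Ioo (0:ℝ) 1 \ Pset u) ⊆ closure P ∧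
          ∀ α ∈ P, KurConv (fun n => cut (un n) α) (cut u α),
        ∃ P : Set ℝ, P.Countable ∧ P ⊆ Set.Ioo (0:ℝ) 1 \ Pset u ∧
          (Set.Ioo (0:ℝ) 1 \ Pset u) ⊆ closure P ∧
          ∀ α ∈ P, KurConv (fun n => cut (un n) α) (cut u α) ] := by
  
  tfae_have 1 → 3 := imp13 hu hun
  tfae_have 3 → 2 := imp32 hu
  tfae_have 2 → 4 := imp24 hu
  tfae_have 4 → 5 := imp45
  tfae_have 5 → 1 := imp51 hu hun
  tfae_finish
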